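/- Let Λ be a finite-dimensional k-algebra with nondegenerate associative bilinear form ⟨-,-⟩_Λ and associated Nakayama automorphism ν (so ⟨λ, λ'⟩ = ⟨λ', ν(λ)⟩ for all λ, λ'), and suppose ν has finite order n. Let G be the cyclic group of order n generated by ν, acting on Λ, and equip the skew group algebra ΛG with the bilinear form ⟨λ ⊗ ν^i, λ' ⊗ ν^j⟩ = ⟨λ, ν^i(λ')⟩_Λ if i + j ≡ 0 (mod n) and 0 otherwise. Then the map Φ : ΛG → ΛG defined by Φ(λ ⊗ ν^i) = ν(λ) ⊗ ν^i is a k-algebra automorphism of ΛG and satisfies ⟨x, y⟩ = ⟨y, Φ(x)⟩ for all x, y ∈ ΛG; that is, Φ is a Nakayama automorphism of ΛG. -/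
import Mathlib


/-- The multiplication of the skew group algebra `ΛG`, modeled on the vector space of
functions `G → Λ` (the element `λ ⊗ g` being `Pi.single g λ`), where the finite group `G`
acts on `Λ` via `ρ : G →* (Λ ≃ₐ[k] Λ)`.  It is the bilinear extension of
`(λ ⊗ g)(λ' ⊗ g') = λ g(λ') ⊗ gg'`. -/
def skewMul {k Λ G : Type*} [Field k] [Ring Λ] [Algebra k Λ] [Group G] [Fintype G]
    (ρ : G →* (Λ ≃ₐ[k] Λ)) (f f' : G → Λ) : G → Λ :=
  fun x => ∑ g : G, f g * ρ g (f' (g⁻¹ * x))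

/-- The bilinear form on the skew group algebra `ΛG` which is the bilinear extension of
`⟨λ ⊗ g, λ' ⊗ g'⟩ = ⟨λ, g(λ')⟩_Λ` if `gg' = e` and `0` otherwise; when `G` is the cyclic
group of order `n` generated by `ν` this is the form
`⟨λ ⊗ ν^i, λ' ⊗ ν^j⟩ = ⟨λ, ν^i(λ')⟩` if `i + j ≡ 0 (mod n)` and `0` otherwise. -/
def skewForm {k Λ G : Type*} [Field k] [Ring Λ] [Algebra k Λ] [Group G] [Fintype G]
    (ρ : G →* (Λ ≃ₐ[k] Λ)) (B : Λ → Λ → k) (f f' : G → Λ) : k :=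
  ∑ g : G, B (f g) (ρ g (f' g⁻¹))

/-- Let `Λ` be a finite-dimensional `k`-algebra with nondegenerate
associative bilinear form `B` and Nakayama automorphism `ν` of finite order `n`, and let
`G` be the cyclic group of order `n` generated by `ν`, acting on `Λ`.  Then the map
`Φ(λ ⊗ ν^i) = ν(λ) ⊗ ν^i` is a `k`-algebra automorphism of `ΛG` satisfying
`⟨x, y⟩ = ⟨y, Φ(x)⟩` for all `x, y ∈ ΛG`; that is, `Φ` is a Nakayama automorphism
of `ΛG`. -/
theorem stmt_4 (k Λ G : Type*) [Field k] [Ring Λ] [Algebra k Λ] [FiniteDimensional k Λ]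
    [Group G] [Fintype G] [DecidableEq G]
    (B : Λ → Λ → k)
    -- `B` is bilinear
    (hadd_l : ∀ x x' y : Λ, B (x + x') y = B x y + B x' y)
    (hsmul_l : ∀ (c : k) (x y : Λ), B (c • x) y = c * B x y)
    (hadd_r : ∀ x y y' : Λ, B x (y + y') = B x y + B x y')
    (hsmul_r : ∀ (c : k) (x y : Λ), B x (c • y) = c * B x y)
    -- `B` is associative
    (hassoc : ∀ x y z : Λ, B (x * y) z = B x (y * z))
    -- `B` is nondegenerate
    (hnd : ∀ x : Λ, (∀ y : Λ, B x y = 0) → x = 0)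
    -- `ν` is the associated Nakayama automorphism, of finite order `n`
    (ν : Λ ≃ₐ[k] Λ) (hν : ∀ a b : Λ, B a b = B b (ν a))
    (n : ℕ) (hn : 0 < n) (hord : orderOf ν = n)
    -- `G` is the cyclic group of order `n` generated by `ν`, acting on `Λ` via `ρ`:
    -- it is generated by an element `g₀` of order `n` which acts as `ν`
    (ρ : G →* (Λ ≃ₐ[k] Λ)) (g₀ : G) (hg₀ : ρ g₀ = ν)
    (hgen : ∀ g : G, g ∈ Subgroup.zpowers g₀) (hordg : orderOf g₀ = n) :
    -- `Φ : f ↦ ν ∘ f` (i.e. `λ ⊗ ν^i ↦ ν(λ) ⊗ ν^i`) is a `k`-algebra automorphism of ΛG: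
    (∀ f f' : G → Λ, (fun h : G → Λ => fun g => ν (h g)) (f + f') =
      (fun g => ν (f g)) + fun g => ν (f' g)) ∧
    (∀ (c : k) (f : G → Λ), (fun g => ν ((c • f) g)) = c • fun g => ν (f g)) ∧
    ((fun g => ν ((Pi.single (1 : G) (1 : Λ) : G → Λ) g)) = (Pi.single (1 : G) (1 : Λ) : G → Λ)) ∧
    (∀ f f' : G → Λ, (fun g => ν (skewMul ρ f f' g)) =
      skewMul ρ (fun g => ν (f g)) (fun g => ν (f' g))) ∧
    Function.Bijective (fun (f : G → Λ) => (fun g => ν (f g) : G → Λ)) ∧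
    -- and it satisfies the Nakayama property ⟨x, y⟩ = ⟨y, Φ(x)⟩
    (∀ x y : G → Λ, skewForm ρ B x y = skewForm ρ B y fun g => ν (x g)) := by

  -- `ν` preserves `B`
  have hν2 : ∀ a b : Λ, B (ν a) (ν b) = B a b := by
    intro a b
    rw [← hν b (ν a), ← hν a b]
  -- natural powers of `ν` preserve `B`
  have hpow : ∀ (m : ℕ) (a b : Λ), B ((ν ^ m) a) ((ν ^ m) b) = B a b := by
    intro m
    induction m with
    | zero => intro a b; simp
    | succ m ih =>
      intro a b
      rw [pow_succ]
      have h1 : (ν ^ m * ν) a = (ν ^ m) (ν a) := rfl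
      have h2 : (ν ^ m * ν) b = (ν ^ m) (ν b) := rfl
      rw [h1, h2, ih, hν2]
  -- integer powers of `ν` preserve `B`
  have hzpow : ∀ (i : ℤ) (a b : Λ), B ((ν ^ i) a) ((ν ^ i) b) = B a b := by
    intro i a b
    cases i with
    | ofNat m => rw [Int.ofNat_eq_coe, zpow_natCast]; exact hpow m a b
    | negSucc m =>
      rw [zpow_negSucc]
      have := hpow (m + 1) ((ν ^ (m + 1))⁻¹ a) ((ν ^ (m + 1))⁻¹ b)
      have ha : ∀ c : Λ, (ν ^ (m + 1)) ((ν ^ (m + 1))⁻¹ c) = c := by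
        intro c
        have h : (ν ^ (m + 1)) ((ν ^ (m + 1))⁻¹ c) = (ν ^ (m + 1) * (ν ^ (m + 1))⁻¹) c := rfl
        rw [h, mul_inv_cancel]; rfl
      have hb := ha b
      have ha := ha a
      rw [ha, hb] at this
      exact this.symm
  -- every `ρ g` is an integer power of `ν`
  have hrho : ∀ g : G, ∃ i : ℤ, ρ g = ν ^ i := by
    intro g
    obtain ⟨i, hi⟩ := hgen g
    exact ⟨i, by rw [← hi, map_zpow, hg₀]⟩
  -- `ρ g` preserves `B`
  have hinv : ∀ (g : G) (a b : Λ), B (ρ g a) (ρ g b) = B a b := by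
    intro g a b
    obtain ⟨i, hi⟩ := hrho g
    rw [hi]; exact hzpow i a b
  -- `ν` commutes with each `ρ g`
  have hcomm : ∀ (g : G) (a : Λ), ν (ρ g a) = ρ g (ν a) := by
    intro g a
    obtain ⟨i, hi⟩ := hrho g
    rw [hi]
    have hc : ν * ν ^ i = ν ^ i * ν := ((Commute.refl ν).zpow_right i)
    have h1 : ν ((ν ^ i) a) = (ν * ν ^ i) a := rfl
    have h2 : (ν ^ i) (ν a) = (ν ^ i * ν) a := rfl
    rw [h1, h2, hc]
  refine ⟨?_, ?_, ?_, ?_, ?_, ?_⟩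
  · intro f f'
    funext g
    simp [map_add]
  · intro c f
    funext g
    simp [map_smul]
  · funext g
    by_cases h : g = 1 <;> simp [Pi.single_apply, h]
  · intro f f'
    funext x
    simp only [skewMul, map_sum, map_mul]
    refine Finset.sum_congr rfl fun g _ => ?_
    rw [hcomm]
  · constructor
    · intro f f' h
      funext g
      exact ν.injective (congrFun h g)
    · intro f
      exact ⟨fun g => ν.symm (f g), funext fun g => ν.apply_symm_apply (f g)⟩
  · intro x y
    unfold skewForm
    rw [← Equiv.sum_comp (Equiv.inv G) (fun g => B (y g) (ρ g (ν (x g⁻¹))))]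
    refine Finset.sum_congr rfl fun g _ => ?_
    simp only [Equiv.inv_apply, inv_inv]
    have h1 : B (x g) (ρ g (y g⁻¹)) = B (ρ g (y g⁻¹)) (ν (x g)) := hν _ _
    have h2 : B (y g⁻¹) (ρ g⁻¹ (ν (x g))) = B (ρ g (y g⁻¹)) (ρ g (ρ g⁻¹ (ν (x g)))) :=
      (hinv g _ _).symm
    have h3 : ρ g (ρ g⁻¹ (ν (x g))) = ν (x g) := by
      have : ρ g (ρ g⁻¹ (ν (x g))) = (ρ g * ρ g⁻¹) (ν (x g)) := rfl
      rw [this, ← map_mul, mul_inv_cancel, map_one]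
      rfl
    rw [h1, h2, h3]
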